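/- Let m ≥ 1 and n ≠ 0 be integers, let x ∈ ℂ with x² = 4, and let y ∈ ℂ. Define z = 2 − (y−2)·(S_m(y) − S_{m−1}(y))² and t = 1 + (y−2)·S_{m−1}(y)·(S_m(y) − S_{m−1}(y)). If t·S_{n−1}(z) − S_{n−2}(z) = 0, then S_m(y) ≠ 0 and S_{m−1}(y) ≠ 0. -/

import Mathlib

open Polynomial

/-- Integer-indexed Chebyshev-like polynomials: `S 0 = 1`, `S 1 = X`,
and `S (l+1) = X * S l - S (l-1)` for all `l : ℤ`
(equivalently `S l = U_l (v/2)` for the Chebyshev polynomials `U` of the second kind). -/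
@[semireducible] noncomputable def chebS (R : Type*) [CommRing R] : ℤ → R[X]
  | 0 => 1
  | 1 => X
  | (n : ℕ) + 2 => X * chebS R (n + 1) - chebS R n
  | -((n : ℕ) + 1) => X * chebS R (-n) - chebS R (-n + 1)
  termination_by n => Int.natAbs n + Int.natAbs (n - 1)

lemma chebS_zero (R : Type*) [CommRing R] : chebS R 0 = 1 := by rw [chebS.eq_def]
lemma chebS_one (R : Type*) [CommRing R] : chebS R 1 = X := by rw [chebS.eq_def]
lemma chebS_nat (R : Type*) [CommRing R] (n : ℕ) :
    chebS R ((n:ℤ) + 2) = X * chebS R ((n:ℤ)+1) - chebS R n := by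
  rw [chebS.eq_def]; rfl
lemma chebS_negSucc (R : Type*) [CommRing R] (n : ℕ) :
    chebS R (Int.negSucc n) = X * chebS R (-(n:ℤ)) - chebS R (-(n:ℤ) + 1) := by
  rw [chebS.eq_def]

lemma chebS_neg_one (R : Type*) [CommRing R] : chebS R (-1) = 0 := by
  have h := chebS_negSucc R 0
  have e : Int.negSucc 0 = -1 := rfl
  rw [e] at h
  norm_num at h
  rw [h, chebS_zero, chebS_one]
  ring

lemma chebS_rec (R : Type*) [CommRing R] (l : ℤ) :
    chebS R (l + 1) = X * chebS R l - chebS R (l - 1) := by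
  obtain ⟨k⟩ | k := l
  · match k with
    | 0 =>
      have e1 : (Int.ofNat 0) + 1 = (1:ℤ) := rfl
      have e2 : (Int.ofNat 0) = (0:ℤ) := rfl
      have e3 : (Int.ofNat 0) - 1 = (-1:ℤ) := rfl
      rw [e1, e2]
      norm_num
      rw [chebS_zero, chebS_one, chebS_neg_one]; ring
    | Nat.succ j =>
      have e1 : (Int.ofNat (j+1)) + 1 = (j:ℤ) + 2 := by simp; ring
      have e2 : (Int.ofNat (j+1)) = (j:ℤ) + 1 := by simp
      have e3 : (Int.ofNat (j+1)) - 1 = (j:ℤ) := by simp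
      rw [e1, e2]
      norm_num
      rw [chebS_nat]
  · have h2 := chebS_negSucc R (k+1)
    have e5 : Int.negSucc (k+1) = Int.negSucc k - 1 := by simp [Int.negSucc_eq]; ring
    have e6 : -((k+1:ℕ):ℤ) = Int.negSucc k := by simp [Int.negSucc_eq]
    have e7 : -((k+1:ℕ):ℤ) + 1 = Int.negSucc k + 1 := by rw [e6]
    rw [e5, e6] at h2
    rw [h2]; ring

/-- Pair induction principle on ℤ. -/
lemma int_pair_induction (P : ℤ → Prop) (h0 : P 0) (hneg1 : P (-1))
    (hup : ∀ l : ℤ, P l → P (l-1) → P (l+1))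
    (hdown : ∀ l : ℤ, P l → P (l+1) → P (l-1)) : ∀ l, P l := by
  have key : ∀ l : ℤ, P l ∧ P (l-1) := by
    intro l
    induction l using Int.induction_on with
    | zero => exact ⟨h0, by norm_num; exact hneg1⟩
    | succ k ih =>
      have e : ((k:ℤ) + 1) - 1 = k := by ring
      refine ⟨hup k ih.1 ih.2, by rw [e]; exact ih.1⟩
    | pred k ih =>
      have e1 : (-(k:ℤ) - 1) = -k - 1 := by ring
      have h1 : P (-(k:ℤ) - 1) := ih.2
      have h2 : P ((-(k:ℤ) - 1) + 1) := by norm_num; exact ih.1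
      have h3 : P ((-(k:ℤ) - 1) - 1) := hdown _ h1 h2
      constructor
      · exact h1
      · exact h3
  exact fun l => (key l).1

/-- eval recurrence -/
lemma chebS_eval_rec (a : ℂ) (l : ℤ) :
    (chebS ℂ (l+1)).eval a = a * (chebS ℂ l).eval a - (chebS ℂ (l-1)).eval a := by
  rw [chebS_rec]; simp

lemma cheb_identity (a : ℂ) (l : ℤ) :
    ((chebS ℂ l).eval a)^2 + ((chebS ℂ (l-1)).eval a)^2
      - a * (chebS ℂ l).eval a * (chebS ℂ (l-1)).eval a = 1 := by
  induction l using int_pair_induction with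
  | h0 => norm_num [chebS_zero, chebS_neg_one]
  | hneg1 =>
    have e : (-1 : ℤ) - 1 = -2 := by ring
    have h2 : chebS ℂ (-2 : ℤ) = -1 := by
      have h := chebS_negSucc ℂ 1
      have e2 : Int.negSucc 1 = -2 := rfl
      rw [e2] at h
      norm_num [chebS_neg_one, chebS_zero] at h
      try rw [h]
      try ring
      try exact h
    rw [e, h2, chebS_neg_one]
    norm_num
  | hup l ih1 ih2 =>
    have hr := chebS_eval_rec a l
    have e : (l:ℤ) + 1 - 1 = l := by ring
    rw [e, hr]
    linear_combination ih1
  | hdown l ih1 ih2 =>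
    have hr := chebS_eval_rec a (l-1)
    have e : (l:ℤ) - 1 + 1 = l := by ring
    rw [e] at hr
    have e2 : (l:ℤ) - 1 - 1 = l - 1 - 1 := rfl
    -- hr : S l = a * S (l-1) - S (l-1-1)
    have hsub : (chebS ℂ (l-1-1)).eval a = a * (chebS ℂ (l-1)).eval a - (chebS ℂ l).eval a := by
      linear_combination hr
    rw [hsub]
    linear_combination ih1

lemma chebS_eval_two (l : ℤ) : (chebS ℂ l).eval 2 = (l : ℂ) + 1 := by
  induction l using int_pair_induction with
  | h0 => norm_num [chebS_zero]
  | hneg1 => norm_num [chebS_neg_one]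
  | hup l ih1 ih2 =>
    rw [chebS_eval_rec 2 l, ih1, ih2]; push_cast; ring
  | hdown l ih1 ih2 =>
    have hr := chebS_eval_rec 2 l
    have e : (l:ℤ) + 1 - 1 = l := by ring
    push_cast at ih1 ih2 ⊢
    linear_combination 2 * ih1 - ih2 + hr

lemma chebS_eval_formula (u : ℂ) (hu : u ≠ 0) (l : ℤ) :
    (u - u⁻¹) * (chebS ℂ l).eval (u + u⁻¹) = u ^ (l+1) - u ^ (-(l+1)) := by
  induction l using int_pair_induction with
  | h0 => simp [chebS_zero]
  | hneg1 => simp [chebS_neg_one]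
  | hup l ih1 ih2 =>
    have hr := chebS_eval_rec (u + u⁻¹) l
    rw [hr]
    have e0 : (l:ℤ) - 1 + 1 = l := by ring
    rw [e0] at ih2
    set A := u ^ l with hA
    have hA0 : A ≠ 0 := zpow_ne_zero _ hu
    have e1 : u ^ (l + 1) = A * u := zpow_add_one₀ hu l
    have e2 : u ^ (l + 1 + 1) = A * u * u := by
      rw [show l + 1 + 1 = (l+1) + 1 from rfl, zpow_add_one₀ hu, e1]
    have e3 : u ^ (-(l+1)) = (A * u)⁻¹ := by rw [zpow_neg, e1]
    have e4 : u ^ (-(l+1+1)) = (A * u * u)⁻¹ := by rw [zpow_neg, e2]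
    have e5 : u ^ (-l) = A⁻¹ := by rw [zpow_neg]
    have e6 : u ^ (l - 1 + 1) = A := by rw [show l - 1 + 1 = l from by ring]
    have e7 : u ^ (-(l - 1 + 1)) = A⁻¹ := by rw [show l - 1 + 1 = l from by ring, zpow_neg]
    rw [e1, e3] at ih1
    rw [e5] at ih2
    rw [e2, e4]
    have hu1 : u * u⁻¹ = 1 := mul_inv_cancel₀ hu
    simp only [mul_inv] at ih1 ih2 ⊢
    linear_combination (u + u⁻¹) * ih1 - ih2 + (A - A⁻¹) * hu1
  | hdown l ih1 ih2 =>
    have hr := chebS_eval_rec (u + u⁻¹) (l - 1)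
    rw [show l - 1 + 1 = l from by ring] at hr
    -- hr : S l = (u+u⁻¹) S(l-1) - S(l-1-1)
    set A := u ^ l with hA
    have hA0 : A ≠ 0 := zpow_ne_zero _ hu
    have e1 : u ^ (l + 1) = A * u := zpow_add_one₀ hu l
    have e3 : u ^ (-(l+1)) = (A * u)⁻¹ := by rw [zpow_neg, e1]
    have e6 : u ^ (l - 1 + 1) = A := by rw [show l - 1 + 1 = l from by ring]
    have e7 : u ^ (-(l - 1 + 1)) = A⁻¹ := by rw [show l - 1 + 1 = l from by ring, zpow_neg]
    have e8 : u ^ (l - 1 - 1 + 1) = A * u⁻¹ := by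
      rw [show l - 1 - 1 + 1 = l + -1 from by ring, zpow_add₀ hu, zpow_neg_one]
    have e9 : u ^ (-(l - 1 - 1 + 1)) = (A * u⁻¹)⁻¹ := by rw [zpow_neg, e8]
    have e10 : u ^ (l + 1 + 1) = A * u * u := by
      rw [show l + 1 + 1 = (l+1) + 1 from rfl, zpow_add_one₀ hu, e1]
    have e11 : u ^ (-(l+1+1)) = (A * u * u)⁻¹ := by rw [zpow_neg, e10]
    rw [e1, e3] at ih1
    rw [e10, e11] at ih2
    rw [e6, e7]
    have hr2 := chebS_eval_rec (u + u⁻¹) l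
    have hsub : (chebS ℂ (l-1)).eval (u+u⁻¹)
        = (u + u⁻¹) * (chebS ℂ l).eval (u+u⁻¹) - (chebS ℂ (l+1)).eval (u+u⁻¹) := by
      linear_combination hr2
    rw [hsub]
    have hu1 : u * u⁻¹ = 1 := mul_inv_cancel₀ hu
    simp only [mul_inv] at ih1 ih2 ⊢
    linear_combination (u + u⁻¹) * ih1 - ih2 + (A - A⁻¹) * hu1

lemma exists_half (y : ℂ) : ∃ u : ℂ, u ≠ 0 ∧ u + u⁻¹ = y := by
  obtain ⟨s, hs2⟩ := IsAlgClosed.exists_pow_nat_eq (k := ℂ) (y^2 - 4) (n := 2) (by norm_num)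
  set u : ℂ := (y + s) / 2 with hudef
  have hmul : u * (y - u) = 1 := by
    rw [hudef]
    field_simp
    linear_combination -hs2
  have hu0 : u ≠ 0 := left_ne_zero_of_mul_eq_one hmul
  have hinv : u⁻¹ = y - u := inv_eq_of_mul_eq_one_right hmul
  exact ⟨u, hu0, by rw [hinv]; ring⟩

lemma abs_one_of_zpow {u : ℂ} (hu : u ≠ 0) {N : ℤ} (hN : N ≠ 0) (h : u ^ N = 1) :
    ‖u‖ = 1 := by
  have h1 : u ^ (N.natAbs : ℤ) = 1 := by
    rcases Int.natAbs_eq N with h' | h'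
    · rw [← h']; exact h
    · rw [show ((N.natAbs : ℤ)) = -N from by omega, zpow_neg, h, inv_one]
  rw [zpow_natCast] at h1
  have h2 : ‖u‖ ^ N.natAbs = 1 := by
    rw [← norm_pow, h1, norm_one]
  have hk : N.natAbs ≠ 0 := by omega
  have h0 : (0:ℝ) ≤ ‖u‖ := norm_nonneg u
  rcases lt_trichotomy (‖u‖) 1 with h' | h' | h'
  · nlinarith [pow_lt_one₀ h0 h' hk]
  · exact h'
  · nlinarith [one_lt_pow₀ h' hk]

lemma chebS_root_bound (l : ℤ) (hl : l ≠ -1) (y : ℂ) (hy : (chebS ℂ l).eval y = 0) :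
    y.im = 0 ∧ y.re < 2 := by
  obtain ⟨u, hu0, huy⟩ := exists_half y
  have hf := chebS_eval_formula u hu0 l
  rw [huy, hy, mul_zero] at hf
  have h1 : u ^ (l+1) = u ^ (-(l+1)) := by linear_combination -hf
  have hpow : u ^ (2*(l+1)) = 1 := by
    rw [show 2*(l+1) = (l+1)+(l+1) from by ring, zpow_add₀ hu0]
    nth_rewrite 2 [h1]
    rw [← zpow_add₀ hu0, show (l+1) + -(l+1) = 0 from by ring, zpow_zero]
  have habs : ‖u‖ = 1 := abs_one_of_zpow hu0 (by omega) hpow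
  have hconj : u⁻¹ = (starRingEnd ℂ) u :=
    Complex.inv_eq_conj (by rw [habs])
  have hre : y = ((2 * u.re : ℝ) : ℂ) := by rw [← huy, hconj, Complex.add_conj]
  have him : y.im = 0 := by rw [hre]; simp
  have hrele : u.re ≤ 1 := habs ▸ Complex.re_le_norm u
  have hlt : u.re < 1 := by
    rcases lt_or_eq_of_le hrele with h' | h'
    · exact h'
    · exfalso
      have hns : u.re * u.re + u.im * u.im = 1 := by
        have h2 := Complex.sq_norm u
        rw [habs, Complex.normSq_apply] at h2
        linarith [h2.symm]
      have him0 : u.im = 0 := by nlinarith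
      have hu1 : u = 1 := Complex.ext (by simp [← h']) (by simp [him0])
      rw [hu1] at huy
      have hy2 : y = 2 := by rw [← huy]; norm_num
      rw [hy2, chebS_eval_two] at hy
      have : (l:ℂ) = -1 := by linear_combination hy
      exact hl (by exact_mod_cast this)
  refine ⟨him, ?_⟩
  rw [hre]
  simp only [Complex.ofReal_re]
  linarith

lemma chebS_eq_bound (k : ℤ) (z : ℂ)
    (h : (chebS ℂ k).eval z = (chebS ℂ (k-1)).eval z) : z.im = 0 ∧ z.re ≤ 2 := by
  obtain ⟨u, hu0, huz⟩ := exists_half z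
  have hf1 := chebS_eval_formula u hu0 k
  have hf2 := chebS_eval_formula u hu0 (k-1)
  rw [show k-1+1 = k from by ring] at hf2
  have h' : (chebS ℂ k).eval (u+u⁻¹) = (chebS ℂ (k-1)).eval (u+u⁻¹) := by rw [huz]; exact h
  rw [h'] at hf1
  have heq : u^(k+1) - u^(-(k+1)) = u^k - u^(-k) := by rw [← hf1, ← hf2]
  set A := u ^ k with hA
  have hA0 : A ≠ 0 := zpow_ne_zero _ hu0
  have e1 : u ^ (k + 1) = A * u := zpow_add_one₀ hu0 k
  have e3 : u ^ (-(k+1)) = (A * u)⁻¹ := by rw [zpow_neg, e1]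
  have e5 : u ^ (-k) = A⁻¹ := by rw [zpow_neg]
  rw [e1, e3, e5] at heq
  have hu1 : u * u⁻¹ = 1 := mul_inv_cancel₀ hu0
  have hA1 : A * A⁻¹ = 1 := mul_inv_cancel₀ hA0
  have key : (u - 1) * (A * A * u + 1) = 0 := by
    simp only [mul_inv] at heq
    linear_combination (A*u) * heq + hu1 + (u*u⁻¹ - u) * hA1
  rcases mul_eq_zero.1 key with h1 | h2
  · have hu1' : u = 1 := by
      have := sub_eq_zero.1 h1; exact this
    rw [hu1'] at huz
    have : z = 2 := by rw [← huz]; norm_num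
    rw [this]
    norm_num
  · have hm : u ^ (2*k+1) = -1 := by
      rw [show 2*k+1 = k + (k+1) from by ring, zpow_add₀ hu0, e1]
      linear_combination h2
    have hp : u ^ (2*(2*k+1)) = 1 := by
      rw [show 2*(2*k+1) = (2*k+1)+(2*k+1) from by ring, zpow_add₀ hu0, hm]
      ring
    have habs : ‖u‖ = 1 := abs_one_of_zpow hu0 (by omega) hp
    have hconj : u⁻¹ = (starRingEnd ℂ) u :=
      Complex.inv_eq_conj (by rw [habs])
    have hre : z = ((2 * u.re : ℝ) : ℂ) := by rw [← huz, hconj, Complex.add_conj]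
    have hrele : u.re ≤ 1 := habs ▸ Complex.re_le_norm u
    refine ⟨by rw [hre]; simp, ?_⟩
    rw [hre]
    simp only [Complex.ofReal_re]
    linarith


/-- If the Riley polynomial `t·S_{n-1}(z) - S_{n-2}(z)` of the odd double twist knot
`J(2m+1, 2n)` at parabolic meridional trace (`x² = 4`) vanishes, then `S_m(y) ≠ 0` and
`S_{m-1}(y) ≠ 0`. -/
theorem odd_Riley_nonvanishing (m n : ℤ) (hm : 1 ≤ m) (hn : n ≠ 0) (x : ℂ) (hx : x^2 = 4)
    (y z t : ℂ)
    (hz : z = 2 - (y - 2) * ((chebS ℂ m).eval y - (chebS ℂ (m - 1)).eval y) ^ 2)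
    (ht : t = 1 + (y - 2) * (chebS ℂ (m - 1)).eval y
            * ((chebS ℂ m).eval y - (chebS ℂ (m - 1)).eval y))
    (hR : t * (chebS ℂ (n - 1)).eval z - (chebS ℂ (n - 2)).eval z = 0) :
    (chebS ℂ m).eval y ≠ 0 ∧ (chebS ℂ (m - 1)).eval y ≠ 0 := by
  constructor
  · intro hs
    have id := cheb_identity y m
    rw [hs] at id hz ht
    have hs2 : ((chebS ℂ (m-1)).eval y)^2 = 1 := by linear_combination id
    have hz4 : z = 4 - y := by rw [hz]; linear_combination (2 - y) * hs2
    have ht4 : t = z - 1 := by rw [ht, hz4]; linear_combination (2 - y) * hs2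
    have hrec := chebS_eval_rec z (n-1)
    rw [show n-1+1 = n from by ring, show n-1-1 = n-2 from by ring] at hrec
    rw [ht4] at hR
    have hkey : (chebS ℂ n).eval z = (chebS ℂ (n-1)).eval z := by
      rw [hrec]
      linear_combination hR
    have hb2 := chebS_eq_bound n z hkey
    have hb1 := chebS_root_bound m (by omega) y hs
    have hzre : z.re = 4 - y.re := by rw [hz4]; simp [Complex.sub_re]
    linarith [hb2.2, hb1.2]
  · intro hs'
    have id := cheb_identity y m
    rw [hs'] at id hz ht
    have hs2 : ((chebS ℂ m).eval y)^2 = 1 := by linear_combination id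
    have hz4 : z = 4 - y := by rw [hz]; linear_combination (2 - y) * hs2
    have ht1 : t = 1 := by rw [ht]; ring
    rw [ht1] at hR
    have hkey : (chebS ℂ (n-1)).eval z = (chebS ℂ (n-1-1)).eval z := by
      rw [show n-1-1 = n-2 from by ring]
      linear_combination hR
    have hb2 := chebS_eq_bound (n-1) z hkey
    have hb1 := chebS_root_bound (m-1) (by omega) y hs'
    have hzre : z.re = 4 - y.re := by rw [hz4]; simp [Complex.sub_re]
    linarith [hb2.2, hb1.2]
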